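/- Any word over a k-symbol alphabet that contains, for every word w of length n over k symbols, either w or its reversal as a contiguous subword, must have length at least (k^n + k^(⌈n/2⌉) + 2n - 2)/2. -/

import Mathlib

open Finset

theorem unoriented_deBruijn_lower_bound (k n : ℕ) (hk : 0 < k) (hn : 0 < n)
    (s : List (Fin k))
    (hs : ∀ w : List (Fin k), w.length = n → (w <:+: s ∨ w.reverse <:+: s)) :
    (k ^ n + k ^ ((n + 1) / 2) + 2 * n - 2) / 2 ≤ s.length := by
  set m := (n + 1) / 2 with hm
  -- n ≤ s.length
  have h2 : n ≤ s.length := by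
    obtain h | h := hs (List.replicate n ⟨0, hk⟩) List.length_replicate
    · calc n = (List.replicate n (⟨0, hk⟩ : Fin k)).length := List.length_replicate.symm
        _ ≤ s.length := h.length_le
    · calc n = (List.replicate n (⟨0, hk⟩ : Fin k)).reverse.length := by simp
        _ ≤ s.length := h.length_le
  -- the set of length-n infixes
  set I : Finset (List (Fin k)) :=
    (Finset.range (s.length - n + 1)).image (fun i => (s.drop i).take n) with hI
  have hmemI : ∀ w : List (Fin k), w.length = n → w <:+: s → w ∈ I := by
    rintro w hw ⟨a, b, hab⟩
    have hlen : a.length + n ≤ s.length := by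
      rw [← hab]; simp [hw]
    refine Finset.mem_image.2 ⟨a.length, Finset.mem_range.2 (by omega), ?_⟩
    rw [← hab, List.append_assoc, List.drop_left, ← hw, List.take_left]
  have hIcard : I.card ≤ s.length - n + 1 :=
    (Finset.card_image_le).trans (by simp)
  -- palindrome builder
  have hidx : ∀ i : Fin n, min i.val (n - 1 - i.val) < m := by
    intro i; have := i.isLt; omega
  set pal : (Fin m → Fin k) → List (Fin k) :=
    fun f => List.ofFn (fun i : Fin n => f ⟨min i.val (n - 1 - i.val), hidx i⟩) with hpal
  have hpal_len : ∀ f, (pal f).length = n := fun f => List.length_ofFn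
  have hpal_rev : ∀ f, (pal f).reverse = pal f := by
    intro f
    apply List.ext_getElem (by simp [pal])
    intro j h1 h2
    simp only [pal, List.getElem_reverse, List.getElem_ofFn, List.length_ofFn]
    congr 1
    exact Fin.ext (by simp; omega)
  have hpal_inj : Function.Injective pal := by
    intro f g hfg
    funext j
    have hj : (j : ℕ) < n := by have := j.isLt; omega
    have h3 := congrArg (fun l => l.getD j.val ⟨0, hk⟩) hfg
    simp only [pal] at h3
    rw [List.getD_eq_getElem _ _ (by simp [hj]), List.getD_eq_getElem _ _ (by simp [hj])] at h3
    simp only [List.getElem_ofFn] at h3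
    have hjm : min (j : ℕ) (n - 1 - j) = (j : ℕ) := by have := j.isLt; omega
    have heq : ∀ h' : min (j : ℕ) (n - 1 - (j : ℕ)) < m,
        (⟨min (j : ℕ) (n - 1 - (j : ℕ)), h'⟩ : Fin m) = j := fun _ => Fin.ext hjm
    rwa [heq] at h3
  -- palindromes all appear in I
  set P := I.filter (fun u => u.reverse = u) with hP
  have hpal_mem : ∀ f, pal f ∈ P := by
    intro f
    refine Finset.mem_filter.2 ⟨?_, hpal_rev f⟩
    obtain h | h := hs (pal f) (hpal_len f)
    · exact hmemI _ (hpal_len f) h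
    · rw [hpal_rev f] at h; exact hmemI _ (hpal_len f) h
  have hPcard : k ^ m ≤ P.card := by
    calc k ^ m = (univ : Finset (Fin m → Fin k)).card := by simp
      _ ≤ P.card := Finset.card_le_card_of_injOn pal (fun f _ => hpal_mem f)
          (fun a _ b _ h => hpal_inj h)
  -- covering map
  set F : (Fin n → Fin k) → List (Fin k) :=
    fun v => if List.ofFn v <:+: s then List.ofFn v else (List.ofFn v).reverse with hF
  have hFmem : ∀ v : Fin n → Fin k, F v ∈ I := by
    intro v
    simp only [F]
    split
    · exact hmemI _ List.length_ofFn ‹_›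
    · obtain h | h := hs (List.ofFn v) List.length_ofFn
      · exact absurd h ‹_›
      · exact hmemI _ (by simp) h
  have hcard : (univ : Finset (Fin n → Fin k)).card
      = ∑ u ∈ I, (univ.filter (fun v => F v = u)).card :=
    Finset.card_eq_sum_card_fiberwise (fun v _ => hFmem v)
  have hfiber : ∀ u ∈ I, (univ.filter (fun v => F v = u)).card
      ≤ if u.reverse = u then 1 else 2 := by
    intro u _
    have hsub : ∀ v ∈ univ.filter (fun v => F v = u),
        List.ofFn v ∈ ({u, u.reverse} : Finset (List (Fin k))) := by
      intro v hv
      have hv' : F v = u := (Finset.mem_filter.1 hv).2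
      simp only [F] at hv'
      split at hv'
      · simp [hv']
      · have : List.ofFn v = u.reverse := by rw [← hv']; simp
        simp [this]
    have h4 : (univ.filter (fun v => F v = u)).card
        ≤ ({u, u.reverse} : Finset (List (Fin k))).card :=
      Finset.card_le_card_of_injOn (fun v => List.ofFn v) hsub
        (fun a _ b _ h => List.ofFn_injective h)
    split
    · rename_i hrev
      have : ({u, u.reverse} : Finset (List (Fin k))) = {u} := by rw [hrev]; simp
      rw [this] at h4; simpa using h4
    · exact h4.trans ((Finset.card_insert_le _ _).trans (by simp))
  have hsum : ∑ u ∈ I, (univ.filter (fun v => F v = u)).card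
      ≤ ∑ u ∈ I, (if u.reverse = u then 1 else 2) := Finset.sum_le_sum hfiber
  have hsplit : ∑ u ∈ I, (if u.reverse = u then (1:ℕ) else 2)
      = P.card + 2 * (I.card - P.card) := by
    rw [Finset.sum_ite]
    have hc : (I.filter (fun u => ¬ u.reverse = u)).card = I.card - P.card := by
      have := Finset.card_filter_add_card_filter_not
        (s := I) (p := fun u => u.reverse = u)
      rw [hP]
      omega
    simp [hP, hc, mul_comm]
  have hkn : k ^ n ≤ P.card + 2 * (I.card - P.card) := by
    calc k ^ n = (univ : Finset (Fin n → Fin k)).card := by simp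
      _ = _ := hcard
      _ ≤ _ := hsum
      _ = _ := hsplit
  have hPI : P.card ≤ I.card := Finset.card_filter_le _ _
  -- conclude
  have hkn1 : 1 ≤ k ^ n := Nat.one_le_pow _ _ hk
  have hkm1 : 1 ≤ k ^ m := Nat.one_le_pow _ _ hk
  have key : k ^ n + k ^ m ≤ 2 * I.card := by
    have h5 : P.card + (I.card - P.card) = I.card := Nat.add_sub_cancel' hPI
    calc k ^ n + k ^ m ≤ (P.card + 2 * (I.card - P.card)) + P.card :=
          Nat.add_le_add hkn hPcard
      _ = 2 * (P.card + (I.card - P.card)) := by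
          generalize I.card - P.card = x; ring
      _ = 2 * I.card := by rw [h5]
  have hfin : k ^ n + k ^ m ≤ 2 * (s.length - n + 1) :=
    key.trans (Nat.mul_le_mul_left 2 hIcard)
  clear_value m
  clear * - hfin h2 hkn1 hkm1 hm
  omega
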